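/- Let x be a central configuration in ℝ^{n−2} of dimension δ(x) = n−2 for the potential U_a (2a a nonzero integer), with nonzero masses m_1, …, m_n, total mass M ≠ 0 and multiplier λ. If (Δ_1, …, Δ_n) is a nonzero vector in Ker(X) and w_i = Δ_i/m_i for i = 1, …, n, then there exists a constant κ ≠ 0 such that S_{ij} = κ w_i w_j for all 1 ≤ i < j ≤ n; moreover, at least two of the w_i are nonzero. -/

import Mathlib

open Finset Module


/-- The dimension of a configuration: the dimension of the smallest affine
subspace containing the points. -/
noncomputable def confDim {d n : ℕ} (x : Fin n → EuclideanSpace ℝ (Fin d)) : ℕ :=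
  Module.finrank ℝ (affineSpan ℝ (Set.range x)).direction

/-- `x` is a central configuration for the potential `U_a` (with `c2 = 2a ∈ ℤ`),
masses `m`, and multiplier `lam`. -/
def IsCentralConfig {d n : ℕ} (c2 : ℤ) (m : Fin n → ℝ) (lam : ℝ)
    (x : Fin n → EuclideanSpace ℝ (Fin d)) : Prop :=
  ∀ j : Fin n,
    (∑ i ∈ Finset.univ \ {j}, (m i * dist (x i) (x j) ^ c2) • (x i - x j))
      + lam • (x j - (∑ i, m i)⁻¹ • ∑ i, m i • x i) = 0

/-- `S_{ij} = r_{ij}^{2a} − λ/M`. -/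
noncomputable def Sij {n d : ℕ} (c2 : ℤ) (lam M : ℝ)
    (x : Fin n → EuclideanSpace ℝ (Fin d)) (i j : Fin n) : ℝ :=
  dist (x i) (x j) ^ c2 - lam / M

/-- Let `x` be a central configuration in `ℝ^{n−2}` of dimension `n−2`
for `U_a` (`2a = c2` a nonzero integer), with nonzero masses, `M ≠ 0`, multiplier `λ ≠ 0`.
If `(Δ_1,…,Δ_n)` is a nonzero vector in `Ker X` (i.e. `∑ Δ_j = 0` and `∑ Δ_j x_j = 0`)
and `w_i = Δ_i/m_i`, then there exists `κ ≠ 0` with `S_{ij} = κ w_i w_j` for all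
`1 ≤ i < j ≤ n`; moreover at least two of the `w_i` are nonzero. -/
lemma zpow_pos_inj' {a b : ℝ} (ha : 0 < a) (hb : 0 < b) {c : ℤ} (hc : c ≠ 0)
    (h : a ^ c = b ^ c) : a = b := by
  have key : ∀ {a b : ℝ}, 0 < a → 0 < b → ∀ {c : ℤ}, 0 < c → a ^ c = b ^ c → a = b := by
    intro a b ha hb c hcpos h
    lift c to ℕ using hcpos.le with k
    rw [zpow_natCast, zpow_natCast] at h
    have hk : k ≠ 0 := by exact_mod_cast hcpos.ne'
    exact (pow_left_strictMonoOn₀ hk).injOn ha.le hb.le h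
  rcases hc.lt_or_gt with hneg | hpos
  · refine key ha hb (c := -c) (by omega) ?_
    rw [zpow_neg, zpow_neg, h]
  · exact key ha hb hpos h

lemma equidistant_contra {n : ℕ} (hn : 2 ≤ n) (x : Fin n → EuclideanSpace ℝ (Fin (n - 2)))
    (r : ℝ) (hr : 0 < r) (hall : ∀ i j : Fin n, i ≠ j → dist (x i) (x j) = r) : False := by
  classical
  set jn : Fin n := ⟨n - 1, by omega⟩ with hjn
  let e : Fin (n - 1) → Fin n := fun i => ⟨i.1, by omega⟩
  have hej : ∀ i : Fin (n - 1), e i ≠ jn := by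
    intro i h
    have := congrArg Fin.val h
    simp only [e, hjn] at this
    omega
  have heinj : Function.Injective e := fun i j h =>
    Fin.ext (by simpa [e] using congrArg Fin.val h)
  let u : Fin (n - 1) → EuclideanSpace ℝ (Fin (n - 2)) := fun i => x (e i) - x jn
  have hnorm : ∀ i, ‖u i‖ = r := by
    intro i
    rw [show u i = x (e i) - x jn from rfl, ← dist_eq_norm]
    exact hall _ _ (hej i)
  have hinner : ∀ i j : Fin (n - 1),
      (inner ℝ (u i) (u j) : ℝ) = r ^ 2 / 2 + (if i = j then r ^ 2 / 2 else 0) := by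
    intro i j
    by_cases h : i = j
    · subst h
      rw [real_inner_self_eq_norm_sq, hnorm, if_pos rfl]; ring
    · have hd : ‖u i - u j‖ = r := by
        have : u i - u j = x (e i) - x (e j) := by
          simp only [u]; abel
        rw [this, ← dist_eq_norm]
        exact hall _ _ (fun hh => h (heinj hh))
      have h2 := norm_sub_sq_real (u i) (u j)
      rw [hd, hnorm, hnorm] at h2
      rw [if_neg h]
      linarith
  have hli : LinearIndependent ℝ u := by
    rw [Fintype.linearIndependent_iff]
    intro g hg i
    have h0 : (∑ i, ∑ j, g j * (g i * (inner ℝ (u i) (u j) : ℝ))) = 0 := by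
      have h1 : (inner ℝ (∑ i, g i • u i) (∑ j, g j • u j) : ℝ) = 0 := by
        rw [hg, inner_zero_left]
      rw [sum_inner] at h1
      simp only [inner_sum, real_inner_smul_left, real_inner_smul_right] at h1
      exact h1
    have h2 : (∑ i, ∑ j, g j * (g i * (r ^ 2 / 2 + if i = j then r ^ 2 / 2 else 0))) = 0 := by
      calc (∑ i, ∑ j, g j * (g i * (r ^ 2 / 2 + if i = j then r ^ 2 / 2 else 0)))
          = ∑ i, ∑ j, g j * (g i * (inner ℝ (u i) (u j) : ℝ)) :=
            Finset.sum_congr rfl fun i _ => Finset.sum_congr rfl fun j _ => by rw [hinner]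
        _ = 0 := h0
    have h3 : r ^ 2 / 2 * ((∑ i, g i) ^ 2 + ∑ i, (g i) ^ 2) = 0 := by
      have step : ∀ i : Fin (n - 1),
          (∑ j, g j * (g i * (r ^ 2 / 2 + if i = j then r ^ 2 / 2 else 0)))
            = (∑ j, g j) * g i * (r ^ 2 / 2) + g i ^ 2 * (r ^ 2 / 2) := by
        intro i
        have hterm : ∀ j : Fin (n - 1), g j * (g i * (r ^ 2 / 2 + if i = j then r ^ 2 / 2 else 0))
            = g j * g i * (r ^ 2 / 2) + (if i = j then g j * g i * (r ^ 2 / 2) else 0) := by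
          intro j; split <;> ring
        rw [Finset.sum_congr rfl fun j _ => hterm j, Finset.sum_add_distrib,
          Finset.sum_ite_eq univ i (fun j => g j * g i * (r ^ 2 / 2)), if_pos (mem_univ i),
          ← Finset.sum_mul, ← Finset.sum_mul]
        ring
      rw [Finset.sum_congr rfl fun i _ => step i, Finset.sum_add_distrib] at h2
      rw [← h2, ← Finset.sum_mul, ← Finset.sum_mul, ← Finset.mul_sum]
      ring
    have hA : ((∑ i, g i) ^ 2 + ∑ i, (g i) ^ 2) = 0 := by
      have hne : r ^ 2 / 2 ≠ 0 := by positivity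
      exact (mul_eq_zero.1 h3).resolve_left hne
    have hsq : (∑ i, (g i) ^ 2) = 0 := by
      have h4 : (0:ℝ) ≤ (∑ i, g i) ^ 2 := sq_nonneg _
      have h5 : (0:ℝ) ≤ ∑ i, (g i) ^ 2 := Finset.sum_nonneg fun i _ => sq_nonneg _
      linarith
    have hgi := (Finset.sum_eq_zero_iff_of_nonneg (fun i _ => sq_nonneg (g i))).1 hsq i (mem_univ i)
    exact pow_eq_zero_iff two_ne_zero |>.1 hgi
  have hcard := hli.fintype_card_le_finrank
  rw [finrank_euclideanSpace] at hcard
  simp only [Fintype.card_fin] at hcard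
  omega

lemma ker_dim_one {n : ℕ} (hn : 2 ≤ n) (x : Fin n → EuclideanSpace ℝ (Fin (n - 2)))
    (hdim : Module.finrank ℝ (affineSpan ℝ (Set.range x)).direction = n - 2)
    (Δ : Fin n → ℝ) (hΔ : Δ ≠ 0) (hker1 : ∑ i, Δ i = 0) (hker2 : ∑ i, Δ i • x i = 0)
    (v : Fin n → ℝ) (hv1 : ∑ i, v i = 0) (hv2 : ∑ i, v i • x i = 0) :
    ∃ t : ℝ, v = t • Δ := by
  classical
  let L : (Fin n → ℝ) →ₗ[ℝ] ℝ × EuclideanSpace ℝ (Fin (n - 2)) :=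
    { toFun := fun v => (∑ i, v i, ∑ i, v i • x i)
      map_add' := by
        intro a b
        simp [add_smul, Finset.sum_add_distrib, Prod.ext_iff]
      map_smul' := by
        intro c a
        simp [Prod.ext_iff, Finset.mul_sum, smul_smul, Finset.smul_sum] }
  set j0 : Fin n := ⟨0, by omega⟩ with hj0
  have hrange : LinearMap.range L = Submodule.span ℝ (Set.range fun i => ((1:ℝ), x i)) := by
    have h1 : LinearMap.range L
        = Submodule.map L (Submodule.span ℝ (Set.range (Pi.basisFun ℝ (Fin n)))) := by
      rw [Basis.span_eq, Submodule.map_top]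
    rw [h1, Submodule.map_span, ← Set.range_comp]
    refine congrArg (Submodule.span ℝ) (congrArg Set.range (funext fun i => ?_))
    show L (Pi.basisFun ℝ (Fin n) i) = ((1:ℝ), x i)
    have e1 : (∑ j, Pi.basisFun ℝ (Fin n) i j) = 1 := by
      simp [Pi.basisFun_apply, Pi.single_apply]
    have e2 : (∑ j, Pi.basisFun ℝ (Fin n) i j • x j) = x i := by
      simp [Pi.basisFun_apply, Pi.single_apply, ite_smul]
    exact Prod.ext e1 e2
  set W : Submodule ℝ (ℝ × EuclideanSpace ℝ (Fin (n - 2))) :=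
    Submodule.span ℝ (Set.range fun i => ((1:ℝ), x i)) with hW
  let π : (ℝ × EuclideanSpace ℝ (Fin (n - 2))) →ₗ[ℝ] EuclideanSpace ℝ (Fin (n - 2)) :=
    { toFun := fun p => p.2 - p.1 • x j0
      map_add' := by intro p q; simp [add_smul]; abel
      map_smul' := by intro c p; simp [smul_sub, smul_smul] }
  let ρ : W →ₗ[ℝ] EuclideanSpace ℝ (Fin (n - 2)) := π.comp W.subtype
  have hrho_range : LinearMap.range ρ = Submodule.span ℝ (Set.range fun i => x i - x j0) := by
    rw [LinearMap.range_comp, Submodule.range_subtype, hW, Submodule.map_span, ← Set.range_comp]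
    refine congrArg (Submodule.span ℝ) (congrArg Set.range (funext fun i => ?_))
    show x i - (1:ℝ) • x j0 = x i - x j0
    rw [one_smul]
  have hrho_rank : finrank ℝ (LinearMap.range ρ) = n - 2 := by
    rw [hrho_range]
    have hvs := vectorSpan_range_eq_span_range_vsub_right ℝ x j0
    rw [direction_affineSpan, hvs] at hdim
    simpa [vsub_eq_sub] using hdim
  have hv0mem : (((1:ℝ), x j0) : ℝ × EuclideanSpace ℝ (Fin (n - 2))) ∈ W :=
    Submodule.subset_span ⟨j0, rfl⟩
  set v0 : W := ⟨((1:ℝ), x j0), hv0mem⟩ with hv0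
  have hrho_ker : LinearMap.ker ρ = Submodule.span ℝ {v0} := by
    ext u
    constructor
    · intro hu
      rw [Submodule.mem_span_singleton]
      have h2 : (u : ℝ × EuclideanSpace ℝ (Fin (n - 2))).2
          - (u : ℝ × EuclideanSpace ℝ (Fin (n - 2))).1 • x j0 = 0 := hu
      refine ⟨(u : ℝ × EuclideanSpace ℝ (Fin (n - 2))).1, ?_⟩
      apply Subtype.ext
      have h3 : (u : ℝ × EuclideanSpace ℝ (Fin (n - 2))).2
          = (u : ℝ × EuclideanSpace ℝ (Fin (n - 2))).1 • x j0 := by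
        rwa [sub_eq_zero] at h2
      show (u : ℝ × EuclideanSpace ℝ (Fin (n - 2))).1 • (((1:ℝ), x j0) : ℝ × _)
          = (u : ℝ × EuclideanSpace ℝ (Fin (n - 2)))
      rw [Prod.smul_mk, smul_eq_mul, mul_one, ← h3]
    · intro hu
      rw [Submodule.mem_span_singleton] at hu
      obtain ⟨c, hc⟩ := hu
      rw [LinearMap.mem_ker, ← hc]
      have hz : ρ v0 = 0 := by
        show x j0 - (1:ℝ) • x j0 = 0
        rw [one_smul, sub_self]
      rw [map_smul, hz, smul_zero]
  have hv0ne : v0 ≠ 0 := by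
    intro h
    have h1 := congrArg Subtype.val h
    rw [Submodule.coe_zero] at h1
    exact one_ne_zero (congrArg Prod.fst h1)
  have hrho_kerrank : finrank ℝ (LinearMap.ker ρ) = 1 := by
    rw [hrho_ker]
    exact finrank_span_singleton hv0ne
  have hWrank : finrank ℝ W = n - 1 := by
    have h := LinearMap.finrank_range_add_finrank_ker ρ
    rw [hrho_rank, hrho_kerrank] at h
    omega
  have hkerL_rank : finrank ℝ (LinearMap.ker L) = 1 := by
    have h := LinearMap.finrank_range_add_finrank_ker L
    rw [hrange, hWrank, Module.finrank_pi] at h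
    simp only [Fintype.card_fin] at h
    omega
  have hLΔ : L Δ = 0 := by
    have : L Δ = ((0:ℝ), (0 : EuclideanSpace ℝ (Fin (n - 2)))) := by
      show ((∑ i, Δ i, ∑ i, Δ i • x i) : ℝ × EuclideanSpace ℝ (Fin (n - 2))) = (0, 0)
      rw [hker1, hker2]
    rw [this, Prod.mk_zero_zero]
  have hΔmem : Δ ∈ LinearMap.ker L := hLΔ
  have hkerL : LinearMap.ker L = Submodule.span ℝ {Δ} := by
    symm
    apply Submodule.eq_of_le_of_finrank_eq
    · rw [Submodule.span_le, Set.singleton_subset_iff]; exact hΔmem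
    · rw [finrank_span_singleton hΔ, hkerL_rank]
  have hvmem : v ∈ LinearMap.ker L := by
    show L v = 0
    have : L v = ((0:ℝ), (0 : EuclideanSpace ℝ (Fin (n - 2)))) := by
      show ((∑ i, v i, ∑ i, v i • x i) : ℝ × EuclideanSpace ℝ (Fin (n - 2))) = (0, 0)
      rw [hv1, hv2]
    rw [this, Prod.mk_zero_zero]
  rw [hkerL, Submodule.mem_span_singleton] at hvmem
  obtain ⟨t, ht⟩ := hvmem
  exact ⟨t, ht.symm⟩

theorem statement1 {n : ℕ} (hn : 2 ≤ n)
    (x : Fin n → EuclideanSpace ℝ (Fin (n - 2))) (hinj : Function.Injective x)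
    (m : Fin n → ℝ) (hm : ∀ i, m i ≠ 0) (hM : ∑ i, m i ≠ 0)
    (c2 : ℤ) (hc2 : c2 ≠ 0) (lam : ℝ) (hlam : lam ≠ 0)
    (hcc : IsCentralConfig c2 m lam x) (hdim : confDim x = n - 2)
    (Δ : Fin n → ℝ) (hΔ : Δ ≠ 0)
    (hker1 : ∑ i, Δ i = 0) (hker2 : ∑ i, Δ i • x i = 0)
    (w : Fin n → ℝ) (hw : ∀ i, w i = Δ i / m i) :
    (∃ κ : ℝ, κ ≠ 0 ∧ ∀ i j : Fin n, i < j →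
        Sij c2 lam (∑ i, m i) x i j = κ * w i * w j) ∧
    ∃ i j : Fin n, i ≠ j ∧ w i ≠ 0 ∧ w j ≠ 0 := by
  classical
  set M := ∑ i, m i with hM0
  have hdim' : Module.finrank ℝ (affineSpan ℝ (Set.range x)).direction = n - 2 := hdim
  have hdistpos : ∀ i j : Fin n, i ≠ j → 0 < dist (x i) (x j) :=
    fun i j hij => dist_pos.2 fun h => hij (hinj h)
  set S : Fin n → Fin n → ℝ := fun i j => dist (x i) (x j) ^ c2 - lam / M with hS
  have hSsym : ∀ i j, S i j = S j i := by intro i j; simp only [hS]; rw [dist_comm]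
  -- Step 1 : ∑_{i≠j} (m_i S_ij) (x_i - x_j) = 0
  have step1 : ∀ j : Fin n, ∑ i ∈ univ \ {j}, (m i * S i j) • (x i - x j) = 0 := by
    intro j
    have h0 := hcc j
    have e1 : lam • (x j - M⁻¹ • ∑ i, m i • x i)
        = ∑ i ∈ univ \ {j}, (m i * (lam / M)) • (x j - x i) := by
      have e2 : ∑ i ∈ univ \ {j}, (m i * (lam / M)) • (x j - x i)
          = ∑ i, (m i * (lam / M)) • (x j - x i) := by
        rw [show (univ \ {j} : Finset (Fin n)) = univ.erase j from by rw [Finset.erase_eq]]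
        exact Finset.sum_erase _ (by simp)
      rw [e2]
      have e3 : ∑ i, (m i * (lam / M)) • (x j - x i)
          = (lam / M) • ((∑ i, m i) • x j - ∑ i, m i • x i) := by
        calc ∑ i, (m i * (lam / M)) • (x j - x i)
            = ∑ i, (lam / M) • (m i • (x j - x i)) := by
              refine Finset.sum_congr rfl fun i _ => ?_
              rw [smul_smul, mul_comm]
          _ = (lam / M) • ∑ i, (m i • x j - m i • x i) := by
              rw [Finset.smul_sum]
              exact Finset.sum_congr rfl fun i _ => by rw [smul_sub]
          _ = (lam / M) • ((∑ i, m i) • x j - ∑ i, m i • x i) := by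
              rw [Finset.sum_sub_distrib, Finset.sum_smul]
      rw [e3, smul_sub, smul_sub]
      congr 1
      · rw [smul_smul, ← hM0, div_mul_cancel₀ _ hM]
      · rw [smul_smul, ← div_eq_mul_inv]
    rw [e1] at h0
    calc ∑ i ∈ univ \ {j}, (m i * S i j) • (x i - x j)
        = ∑ i ∈ univ \ {j}, ((m i * dist (x i) (x j) ^ c2) • (x i - x j)
            + (m i * (lam / M)) • (x j - x i)) := by
          refine Finset.sum_congr rfl fun i _ => ?_
          simp only [hS]
          rw [mul_sub, sub_smul,
            show (m i * (lam / M)) • (x j - x i) = -((m i * (lam / M)) • (x i - x j)) from by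
              rw [← smul_neg, neg_sub],
            sub_eq_add_neg]
      _ = 0 := by rw [Finset.sum_add_distrib]; exact h0
  -- Step 2 : each column vector lies in Ker X, hence is a multiple of Δ
  have hvker : ∀ j : Fin n, ∃ t : ℝ,
      (fun i => if i = j then -(∑ k ∈ univ \ {j}, m k * S k j) else m i * S i j) = t • Δ := by
    intro j
    set v : Fin n → ℝ :=
      fun i => if i = j then -(∑ k ∈ univ \ {j}, m k * S k j) else m i * S i j with hv
    have hsd := Finset.sum_sdiff (f := v) (Finset.subset_univ ({j} : Finset (Fin n)))
    have hsd2 := Finset.sum_sdiff (f := fun i => v i • x i)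
      (Finset.subset_univ ({j} : Finset (Fin n)))
    rw [Finset.sum_singleton] at hsd hsd2
    have h1 : ∑ i ∈ univ \ {j}, v i = ∑ i ∈ univ \ {j}, m i * S i j :=
      Finset.sum_congr rfl fun i hi => by
        simp only [hv]; rw [if_neg (by simpa using (Finset.mem_sdiff.1 hi).2)]
    have h1' : ∑ i ∈ univ \ {j}, v i • x i = ∑ i ∈ univ \ {j}, (m i * S i j) • x i :=
      Finset.sum_congr rfl fun i hi => by
        simp only [hv]; rw [if_neg (by simpa using (Finset.mem_sdiff.1 hi).2)]
    apply ker_dim_one hn x hdim' Δ hΔ hker1 hker2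
    · rw [← hsd, h1]
      simp only [hv, if_pos rfl]
      ring
    · rw [← hsd2, h1']
      have h3 : v j • x j = -∑ i ∈ univ \ {j}, (m i * S i j) • x j := by
        simp only [hv, if_pos rfl]
        rw [neg_smul, Finset.sum_smul]
      rw [h3, ← sub_eq_add_neg, ← Finset.sum_sub_distrib]
      calc ∑ i ∈ univ \ {j}, ((m i * S i j) • x i - (m i * S i j) • x j)
          = ∑ i ∈ univ \ {j}, (m i * S i j) • (x i - x j) :=
            Finset.sum_congr rfl fun i _ => (smul_sub _ _ _).symm
        _ = 0 := step1 j
  choose t ht using hvker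
  have key : ∀ i j : Fin n, i ≠ j → m i * S i j = t j * Δ i := by
    intro i j hij
    have h := congrFun (ht j) i
    simpa [if_neg hij] using h
  have hSw : ∀ i j : Fin n, i ≠ j → S i j = t j * w i := by
    intro i j hij
    have h := key i j hij
    rw [hw i, ← mul_div_assoc, eq_div_iff (hm i)]
    linear_combination h
  -- Step 3 : some S_ij is nonzero
  have hex : ∃ a b : Fin n, a ≠ b ∧ S a b ≠ 0 := by
    by_contra hcon
    push_neg at hcon
    have hij01 : (⟨0, by omega⟩ : Fin n) ≠ ⟨1, by omega⟩ := by simp [Fin.ext_iff]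
    set r := dist (x ⟨0, by omega⟩) (x ⟨1, by omega⟩) with hr0
    have hrpos : 0 < r := hdistpos _ _ hij01
    have hall : ∀ i j : Fin n, i ≠ j → dist (x i) (x j) = r := by
      intro i j hij
      apply zpow_pos_inj' (hdistpos i j hij) hrpos hc2
      have h1 := hcon i j hij
      have h2 := hcon _ _ hij01
      simp only [hS] at h1 h2
      rw [← hr0] at h2
      linarith
    exact equidistant_contra hn x r hrpos hall
  obtain ⟨a, b, hab, hSab⟩ := hex
  have htb : t b ≠ 0 := fun h0 => hSab (by rw [hSw a b hab, h0, zero_mul])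
  have hwa : w a ≠ 0 := fun h0 => hSab (by rw [hSw a b hab, h0, mul_zero])
  have hSba : S b a ≠ 0 := by rw [hSsym b a]; exact hSab
  have hta : t a ≠ 0 := fun h0 => hSba (by rw [hSw b a hab.symm, h0, zero_mul])
  have hwb : w b ≠ 0 := fun h0 => hSba (by rw [hSw b a hab.symm, h0, mul_zero])
  set κ := t b / w b with hκ
  have hκne : κ ≠ 0 := div_ne_zero htb hwb
  have htj : ∀ j : Fin n, t j = κ * w j := by
    intro j
    by_cases hjb : j = b
    · subst hjb; rw [hκ]; exact (div_mul_cancel₀ _ hwb).symm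
    · have h1 := hSw j b hjb
      have h2 := hSw b j (Ne.symm hjb)
      have h3 : S j b = S b j := hSsym j b
      rw [h1, h2] at h3
      rw [hκ, div_mul_eq_mul_div, eq_div_iff hwb]
      linear_combination -h3
  refine ⟨⟨κ, hκne, ?_⟩, ⟨a, b, hab, hwa, hwb⟩⟩
  intro i j hij
  have hne : i ≠ j := ne_of_lt hij
  have hSij : Sij c2 lam M x i j = S i j := rfl
  rw [hSij, hSw i j hne, htj j]
  ring
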